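/- For the k-Möbius digraph game (k odd, k ≥ 3) played by n parties with single-output partial-order correlations, the winning probability is at most 1 − (k+1)/(12k) ≤ 11/12; in particular, for each odd k the bound equals (1/2) + (5k−1)/(12k) and is strictly less than 11/12, approaching 11/12 as k → ∞. -/
import Mathlib


noncomputable section

/-- Single-output partial-order correlations: `p s r x a` is the probability
that the receiver `r` outputs `a` given that the sender `s` received the bit
`x`.  They decompose as a finite mixture over partial orders `σ i` of
conditional distributions in which the output is independent of `x` whenever
the sender does not precede the receiver. -/
def IsPOCorr (n : ℕ) (p : Fin n → Fin n → Bool → Bool → ℝ) : Prop :=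
  ∃ (m : ℕ) (μ : Fin m → ℝ) (σ : Fin m → Fin n → Fin n → Prop)
    (q : Fin m → Fin n → Fin n → Bool → Bool → ℝ),
    (∀ i, 0 ≤ μ i) ∧ (∑ i, μ i = 1) ∧
    (∀ i, IsPartialOrder (Fin n) (σ i)) ∧
    (∀ i s r x a, 0 ≤ q i s r x a) ∧
    (∀ i s r x, ∑ a, q i s r x a = 1) ∧
    (∀ i s r, ¬ σ i s r → ∀ a, q i s r false a = q i s r true a) ∧
    (∀ s r x a, p s r x a = ∑ i, μ i * q i s r x a)

/-- Index offset `i + γ·c` used in the definition of the Möbius digraph,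
where `γ : Bool` encodes the sign `±1` and `c : Bool` a bit. -/
def off (i : ℕ) (γ : Bool) (c : Bool) : ℕ :=
  if c then (if γ then i + 1 else i - 1) else i

/-- The arc relation of the `k`-Möbius digraph on the vertex set
`Bool × Fin k`: for each odd `i < k`, the arcs
`((x, i+γy), (y, i+γ(¬x)))` over `x y : Bool`, `γ = ±1`, together with the
two crossing arcs `((1,0),(0,k−1))` and `((1,k−1),(0,0))`. -/
def MobArc (k : ℕ) (a b : Bool × Fin k) : Prop :=
  (∃ i : ℕ, i < k ∧ i % 2 = 1 ∧ ∃ γ : Bool,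
      (a.2 : ℕ) = off i γ b.1 ∧ (b.2 : ℕ) = off i γ (!a.1)) ∨
  (a.1 = true ∧ (a.2 : ℕ) = 0 ∧ b.1 = false ∧ (b.2 : ℕ) = k - 1) ∨
  (a.1 = true ∧ (a.2 : ℕ) = k - 1 ∧ b.1 = false ∧ (b.2 : ℕ) = 0)

def mobVx (k : ℕ) (hk : 0 < k) (s : Bool) (m : ℕ) : Bool × Fin k :=
  (s, ⟨m % k, Nat.mod_lt m hk⟩)
def mobC (k : ℕ) (hk : 0 < k) (j : Fin k) :
    Finset ((Bool × Fin k) × (Bool × Fin k)) :=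
  if (j : ℕ) = 0 then
    {(mobVx k hk true 0, mobVx k hk false (k-1)),
     (mobVx k hk false (k-1), mobVx k hk true (k-1)),
     (mobVx k hk true (k-1), mobVx k hk false 0),
     (mobVx k hk false 0, mobVx k hk true 0)}
  else if (j : ℕ) % 2 = 1 then
    {(mobVx k hk false j, mobVx k hk false (j+1)),
     (mobVx k hk false (j+1), mobVx k hk true (j+1)),
     (mobVx k hk true (j+1), mobVx k hk true j),
     (mobVx k hk true j, mobVx k hk false j)}
  else
    {(mobVx k hk false (j-1), mobVx k hk false (j-2)),
     (mobVx k hk false (j-2), mobVx k hk true (j-2)),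
     (mobVx k hk true (j-2), mobVx k hk true (j-1)),
     (mobVx k hk true (j-1), mobVx k hk false (j-1))}

lemma mobArc_vv (k : ℕ) (hk : 0 < k) (i : ℕ) (γ : Bool) (hik : i < k)
    (hio : i % 2 = 1) (s1 s2 : Bool) (m1 m2 : ℕ)
    (h1 : m1 % k = off i γ s2) (h2 : m2 % k = off i γ (!s1)) :
    MobArc k (mobVx k hk s1 m1) (mobVx k hk s2 m2) :=
  Or.inl ⟨i, hik, hio, γ, h1, h2⟩

lemma mob_cycle4 {k : ℕ} {τ : (Bool × Fin k) → (Bool × Fin k) → Prop}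
    (hR : ∀ a b c d, τ a b → τ b c → τ c d → τ d a → a = c)
    (a b c d : Bool × Fin k) (hac : a ≠ c)
    (ha : MobArc k a b) (hb : MobArc k b c) (hc : MobArc k c d)
    (hd : MobArc k d a) :
    ∃ e ∈ ({(a,b),(b,c),(c,d),(d,a)} :
        Finset ((Bool × Fin k) × (Bool × Fin k))),
      MobArc k e.1 e.2 ∧ ¬ τ e.1 e.2 := by
  by_cases t1 : τ a b
  · by_cases t2 : τ b c
    · by_cases t3 : τ c d
      · exact ⟨(d, a), by simp, hd, fun t4 => hac (hR a b c d t1 t2 t3 t4)⟩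
      · exact ⟨(c, d), by simp, hc, t3⟩
    · exact ⟨(b, c), by simp, hb, t2⟩
  · exact ⟨(a, b), by simp, ha, t1⟩

lemma mob_exists_bad (k : ℕ) (hk3 : 3 ≤ k) (hk2 : k % 2 = 1) (hk : 0 < k)
    (τ : (Bool × Fin k) → (Bool × Fin k) → Prop)
    (hR : ∀ a b c d, τ a b → τ b c → τ c d → τ d a → a = c)
    (j : Fin k) :
    ∃ e ∈ mobC k hk j, MobArc k e.1 e.2 ∧ ¬ τ e.1 e.2 := by
  have hjlt := j.isLt
  have hmod : ∀ x, x < k → x % k = x := fun x h => Nat.mod_eq_of_lt h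
  unfold mobC
  split_ifs with h0 h1
  · -- crossing cycle
    refine mob_cycle4 hR _ _ _ _ ?_ ?_ ?_ ?_ ?_
    · -- (T,0) ≠ (T,k-1)
      simp only [mobVx, ne_eq, Prod.mk.injEq, Fin.mk.injEq]
      rw [Nat.zero_mod, hmod (k-1) (by omega)]
      omega
    · exact Or.inr (Or.inl ⟨rfl, by simp [mobVx], rfl, by simp [mobVx, hmod (k-1) (by omega)]⟩)
    · exact mobArc_vv k hk (k-2) true (by omega) (by omega) false true (k-1) (k-1)
        (by simp [off, hmod (k-1) (by omega)]; omega)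
        (by simp [off, hmod (k-1) (by omega)]; omega)
    · exact Or.inr (Or.inr ⟨rfl, by simp [mobVx, hmod (k-1) (by omega)], rfl, by simp [mobVx]⟩)
    · exact mobArc_vv k hk 1 false (by omega) (by omega) false true 0 0
        (by simp [off]) (by simp [off])
  · -- j odd
    have hj1 : (j:ℕ) + 1 < k := by omega
    refine mob_cycle4 hR _ _ _ _ ?_ ?_ ?_ ?_ ?_
    · simp [mobVx, Prod.ext_iff]
    · exact mobArc_vv k hk j true hjlt h1 false false j (j+1)
        (by simp [off, hmod _ hjlt]) (by simp [off, hmod _ hj1])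
    · exact mobArc_vv k hk j true hjlt h1 false true (j+1) (j+1)
        (by simp [off, hmod _ hj1]) (by simp [off, hmod _ hj1])
    · exact mobArc_vv k hk j true hjlt h1 true true (j+1) j
        (by simp [off, hmod _ hj1]) (by simp [off, hmod _ hjlt])
    · exact mobArc_vv k hk j true hjlt h1 true false j j
        (by simp [off, hmod _ hjlt]) (by simp [off, hmod _ hjlt])
  · -- j even, j ≥ 2
    have hj2 : 2 ≤ (j:ℕ) := by omega
    have ho : ((j:ℕ) - 1) % 2 = 1 := by omega
    have hl1 : (j:ℕ) - 1 < k := by omega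
    have hl2 : (j:ℕ) - 2 < k := by omega
    refine mob_cycle4 hR _ _ _ _ ?_ ?_ ?_ ?_ ?_
    · simp [mobVx, Prod.ext_iff]
    · exact mobArc_vv k hk (j-1) false hl1 ho false false (j-1) (j-2)
        (by simp [off, hmod _ hl1]) (by simp [off, hmod _ hl2]; omega)
    · exact mobArc_vv k hk (j-1) false hl1 ho false true (j-2) (j-2)
        (by simp [off, hmod _ hl2]; omega) (by simp [off, hmod _ hl2]; omega)
    · exact mobArc_vv k hk (j-1) false hl1 ho true true (j-2) (j-1)
        (by simp [off, hmod _ hl2]; omega) (by simp [off, hmod _ hl1])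
    · exact mobArc_vv k hk (j-1) false hl1 ho true false (j-1) (j-1)
        (by simp [off, hmod _ hl1]) (by simp [off, hmod _ hl1])

lemma mobC_candidates (k : ℕ) (hk3 : 3 ≤ k) (hk2 : k % 2 = 1) (hk : 0 < k)
    (e : (Bool × Fin k) × (Bool × Fin k)) :
    ∃ a b : Fin k, ∀ j : Fin k, e ∈ mobC k hk j → j = a ∨ j = b := by
  obtain ⟨⟨s1, m1⟩, ⟨s2, m2⟩⟩ := e
  have hm1 := m1.isLt
  have hm2 := m2.isLt
  cases s1 <;> cases s2
  · -- (false, false)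
    refine ⟨m1, ⟨(↑m1+1) % k, Nat.mod_lt _ hk⟩, ?_⟩
    intro j hj
    have hjlt := j.isLt
    unfold mobC at hj
    split_ifs at hj with h0 h1 <;>
      simp only [Finset.mem_insert, Finset.mem_singleton, Prod.mk.injEq, mobVx,
        Fin.mk.injEq, Fin.ext_iff, Bool.false_eq_true, Bool.true_eq_false,
        false_and, and_false, false_or, or_false, true_and, and_true] at hj
    · rw [Nat.mod_eq_of_lt hjlt, Nat.mod_eq_of_lt (show (j:ℕ)+1 < k by omega)] at hj
      left; simp only [Fin.ext_iff]; omega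
    · rw [Nat.mod_eq_of_lt (show (j:ℕ)-1 < k by omega),
        Nat.mod_eq_of_lt (show (j:ℕ)-2 < k by omega)] at hj
      right; simp only [Fin.ext_iff]
      rw [Nat.mod_eq_of_lt (show (m1:ℕ)+1 < k by omega)]
      omega
  · -- (false, true)
    refine ⟨if hc : (m1:ℕ) = k - 1 then ⟨0, hk⟩ else ⟨((m1:ℕ)+2) % k, Nat.mod_lt _ hk⟩,
      ⟨((m1:ℕ)-1) % k, Nat.mod_lt _ hk⟩, ?_⟩
    intro j hj
    have hjlt := j.isLt
    unfold mobC at hj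
    split_ifs at hj with h0 h1 <;>
      simp only [Finset.mem_insert, Finset.mem_singleton, Prod.mk.injEq, mobVx,
        Fin.mk.injEq, Fin.ext_iff, Bool.false_eq_true, Bool.true_eq_false,
        false_and, and_false, false_or, or_false, true_and, and_true] at hj
    · -- j = 0 : (F,k-1)→(T,k-1) or (F,0)→(T,0)
      rw [Nat.mod_eq_of_lt (show k-1 < k by omega), Nat.zero_mod] at hj
      rcases hj with ⟨ha, _⟩ | ⟨ha, _⟩
      · left
        rw [dif_pos ha]
        simp only [Fin.ext_iff]; omega
      · right; simp only [Fin.ext_iff]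
        rw [ha]; simp
        omega
    · -- j odd : (F,j+1)→(T,j+1)
      rw [Nat.mod_eq_of_lt (show (j:ℕ)+1 < k by omega)] at hj
      right; simp only [Fin.ext_iff]
      rw [Nat.mod_eq_of_lt (show (m1:ℕ)-1 < k by omega)]
      omega
    · -- j even : (F,j-2)→(T,j-2)
      rw [Nat.mod_eq_of_lt (show (j:ℕ)-2 < k by omega)] at hj
      left
      have hm : ¬ (m1:ℕ) = k - 1 := by omega
      rw [dif_neg hm]
      simp only [Fin.ext_iff]
      rw [Nat.mod_eq_of_lt (show (m1:ℕ)+2 < k by omega)]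
      omega
  · -- (true, false)
    refine ⟨m1, ⟨((m1:ℕ)+1) % k, Nat.mod_lt _ hk⟩, ?_⟩
    intro j hj
    have hjlt := j.isLt
    unfold mobC at hj
    split_ifs at hj with h0 h1 <;>
      simp only [Finset.mem_insert, Finset.mem_singleton, Prod.mk.injEq, mobVx,
        Fin.mk.injEq, Fin.ext_iff, Bool.false_eq_true, Bool.true_eq_false,
        false_and, and_false, false_or, or_false, true_and, and_true] at hj
    · -- j = 0 : crossing arcs
      rw [Nat.mod_eq_of_lt (show k-1 < k by omega), Nat.zero_mod] at hj
      rcases hj with ⟨ha, _⟩ | ⟨ha, _⟩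
      · left; simp only [Fin.ext_iff]; omega
      · right; simp only [Fin.ext_iff]
        have h1 : (m1:ℕ) + 1 = k := by omega
        rw [h1, Nat.mod_self]; omega
    · -- j odd : (T,j)→(F,j)
      rw [Nat.mod_eq_of_lt hjlt] at hj
      left; simp only [Fin.ext_iff]; omega
    · -- j even : (T,j-1)→(F,j-1)
      rw [Nat.mod_eq_of_lt (show (j:ℕ)-1 < k by omega)] at hj
      right; simp only [Fin.ext_iff]
      rw [Nat.mod_eq_of_lt (show (m1:ℕ)+1 < k by omega)]
      omega
  · -- (true, true)
    refine ⟨⟨((m1:ℕ)-1) % k, Nat.mod_lt _ hk⟩, ⟨((m1:ℕ)+2) % k, Nat.mod_lt _ hk⟩, ?_⟩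
    intro j hj
    have hjlt := j.isLt
    unfold mobC at hj
    split_ifs at hj with h0 h1 <;>
      simp only [Finset.mem_insert, Finset.mem_singleton, Prod.mk.injEq, mobVx,
        Fin.mk.injEq, Fin.ext_iff, Bool.false_eq_true, Bool.true_eq_false,
        false_and, and_false, false_or, or_false, true_and, and_true] at hj
    · -- j odd : (T,j+1)→(T,j)
      rw [Nat.mod_eq_of_lt hjlt, Nat.mod_eq_of_lt (show (j:ℕ)+1 < k by omega)] at hj
      left; simp only [Fin.ext_iff]
      rw [Nat.mod_eq_of_lt (show (m1:ℕ)-1 < k by omega)]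
      omega
    · -- j even : (T,j-2)→(T,j-1)
      rw [Nat.mod_eq_of_lt (show (j:ℕ)-1 < k by omega),
        Nat.mod_eq_of_lt (show (j:ℕ)-2 < k by omega)] at hj
      right; simp only [Fin.ext_iff]
      rw [Nat.mod_eq_of_lt (show (m1:ℕ)+2 < k by omega)]
      omega

def mobG (k : ℕ) (hk : 0 < k) (t : Fin 3) (j : Fin k) :
    (Bool × Fin k) × (Bool × Fin k) :=
  match t with
  | ⟨0, _⟩ =>
      if (j : ℕ) = k - 1 then (mobVx k hk true 0, mobVx k hk false (k-1))
      else if (j : ℕ) % 2 = 1 then (mobVx k hk false j, mobVx k hk false (j+1))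
      else (mobVx k hk false (j+1), mobVx k hk false j)
  | ⟨1, _⟩ =>
      if (j : ℕ) = k - 1 then (mobVx k hk true (k-1), mobVx k hk false 0)
      else if (j : ℕ) % 2 = 1 then (mobVx k hk true (j+1), mobVx k hk true j)
      else (mobVx k hk true j, mobVx k hk true (j+1))
  | ⟨_+2, _⟩ =>
      if (j : ℕ) % 2 = 1 then (mobVx k hk true j, mobVx k hk false j)
      else (mobVx k hk false j, mobVx k hk true j)

lemma mobG_cover (k : ℕ) (hk3 : 3 ≤ k) (hk2 : k % 2 = 1) (hk : 0 < k)
    (a b : Bool × Fin k) (h : MobArc k a b) :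
    ∃ t : Fin 3, ∃ j : Fin k, mobG k hk t j = (a, b) := by
  have hmod : ∀ x, x < k → x % k = x := fun x h => Nat.mod_eq_of_lt h
  obtain ⟨x, ma⟩ := a
  obtain ⟨y, mb⟩ := b
  have hma := ma.isLt
  have hmb := mb.isLt
  rcases h with ⟨i, hik, hio, γ, h1, h2⟩ | ⟨hx, ha, hy, hb⟩ | ⟨hx, ha, hy, hb⟩
  · cases x <;> cases y <;> cases γ <;> simp [off] at h1 h2
    · -- F F γ=false : ma = i, mb = i-1
      refine ⟨⟨0, by omega⟩, ⟨i - 1, by omega⟩, ?_⟩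
      simp [mobG, mobVx, Prod.ext_iff, Fin.ext_iff,
        (show ¬(i - 1 = k - 1) by omega), (show ¬((i-1) % 2 = 1) by omega),
        (show i - 1 + 1 = i by omega), hmod i hik, hmod (i-1) (by omega)]
      omega
    · -- F F γ=true : ma = i, mb = i+1
      refine ⟨⟨0, by omega⟩, ⟨i, by omega⟩, ?_⟩
      simp [mobG, mobVx, Prod.ext_iff, Fin.ext_iff,
        (show ¬(i = k - 1) by omega), hio, hmod i hik, hmod (i+1) (by omega)]
      omega
    · -- F T γ=false : ma = i-1, mb = i-1
      refine ⟨⟨2, by omega⟩, ⟨i - 1, by omega⟩, ?_⟩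
      simp [mobG, mobVx, Prod.ext_iff, Fin.ext_iff,
        (show ¬((i-1) % 2 = 1) by omega), hmod (i-1) (by omega)]
      omega
    · -- F T γ=true : ma = i+1, mb = i+1
      refine ⟨⟨2, by omega⟩, ⟨i + 1, by omega⟩, ?_⟩
      simp [mobG, mobVx, Prod.ext_iff, Fin.ext_iff,
        (show ¬((i+1) % 2 = 1) by omega), hmod (i+1) (by omega)]
      omega
    · -- T F γ=false : ma = i, mb = i
      refine ⟨⟨2, by omega⟩, ⟨i, by omega⟩, ?_⟩
      simp [mobG, mobVx, Prod.ext_iff, Fin.ext_iff, hio, hmod i hik]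
      omega
    · -- T F γ=true
      refine ⟨⟨2, by omega⟩, ⟨i, by omega⟩, ?_⟩
      simp [mobG, mobVx, Prod.ext_iff, Fin.ext_iff, hio, hmod i hik]
      omega
    · -- T T γ=false : ma = i-1, mb = i
      refine ⟨⟨1, by omega⟩, ⟨i - 1, by omega⟩, ?_⟩
      simp [mobG, mobVx, Prod.ext_iff, Fin.ext_iff,
        (show ¬(i - 1 = k - 1) by omega), (show ¬((i-1) % 2 = 1) by omega),
        (show i - 1 + 1 = i by omega), hmod i hik, hmod (i-1) (by omega)]
      omega
    · -- T T γ=true : ma = i+1, mb = i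
      refine ⟨⟨1, by omega⟩, ⟨i, by omega⟩, ?_⟩
      simp [mobG, mobVx, Prod.ext_iff, Fin.ext_iff,
        (show ¬(i = k - 1) by omega), hio, hmod i hik, hmod (i+1) (by omega)]
      omega
  · -- crossing 1
    simp at hx ha hy hb
    refine ⟨⟨0, by omega⟩, ⟨k - 1, by omega⟩, ?_⟩
    subst hx; subst hy
    simp [mobG, mobVx, Prod.ext_iff, Fin.ext_iff, hmod (k-1) (by omega)]
    omega
  · -- crossing 2
    simp at hx ha hy hb
    refine ⟨⟨1, by omega⟩, ⟨k - 1, by omega⟩, ?_⟩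
    subst hx; subst hy
    simp [mobG, mobVx, Prod.ext_iff, Fin.ext_iff, hmod (k-1) (by omega)]
    omega

open scoped Classical in
lemma mob_card_le (k : ℕ) (hk3 : 3 ≤ k) (hk2 : k % 2 = 1) (hk : 0 < k) :
    (Finset.univ.filter
      (fun e : (Bool × Fin k) × (Bool × Fin k) => MobArc k e.1 e.2)).card
      ≤ 3 * k := by
  have hsub : (Finset.univ.filter
      (fun e : (Bool × Fin k) × (Bool × Fin k) => MobArc k e.1 e.2))
      ⊆ Finset.univ.image (fun tj : Fin 3 × Fin k => mobG k hk tj.1 tj.2) := by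
    intro e he
    rw [Finset.mem_filter] at he
    obtain ⟨t, j, htj⟩ := mobG_cover k hk3 hk2 hk e.1 e.2 he.2
    exact Finset.mem_image.mpr ⟨(t, j), Finset.mem_univ _, by rw [htj]⟩
  calc (Finset.univ.filter
      (fun e : (Bool × Fin k) × (Bool × Fin k) => MobArc k e.1 e.2)).card
      ≤ (Finset.univ.image (fun tj : Fin 3 × Fin k => mobG k hk tj.1 tj.2)).card :=
        Finset.card_le_card hsub
    _ ≤ (Finset.univ : Finset (Fin 3 × Fin k)).card := Finset.card_image_le
    _ = 3 * k := by simp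

open scoped Classical in
lemma mob_violated (k : ℕ) (hk3 : 3 ≤ k) (hk2 : k % 2 = 1) (hk : 0 < k)
    (τ : (Bool × Fin k) → (Bool × Fin k) → Prop)
    (hR : ∀ a b c d, τ a b → τ b c → τ c d → τ d a → a = c) :
    k + 1 ≤ 2 * (Finset.univ.filter
      (fun e : (Bool × Fin k) × (Bool × Fin k) =>
        MobArc k e.1 e.2 ∧ ¬ τ e.1 e.2)).card := by
  set V := Finset.univ.filter
    (fun e : (Bool × Fin k) × (Bool × Fin k) =>
      MobArc k e.1 e.2 ∧ ¬ τ e.1 e.2) with hV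
  have h1 : ∀ j : Fin k, 1 ≤ (V ∩ mobC k hk j).card := by
    intro j
    obtain ⟨e, he, hm, ht⟩ := mob_exists_bad k hk3 hk2 hk τ hR j
    exact Finset.card_pos.mpr ⟨e, Finset.mem_inter.mpr
      ⟨Finset.mem_filter.mpr ⟨Finset.mem_univ _, hm, ht⟩, he⟩⟩
  have h2 : k ≤ ∑ j : Fin k, (V ∩ mobC k hk j).card := by
    calc k = ∑ _j : Fin k, 1 := by simp
      _ ≤ _ := Finset.sum_le_sum (fun j _ => h1 j)
  have h3 : ∑ j : Fin k, (V ∩ mobC k hk j).card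
      = ∑ e ∈ V, (Finset.univ.filter (fun j => e ∈ mobC k hk j)).card := by
    have hin : ∀ j, V ∩ mobC k hk j = V.filter (fun e => e ∈ mobC k hk j) := by
      intro j
      ext e
      simp [Finset.mem_filter, Finset.mem_inter]
    simp_rw [hin, Finset.card_filter]
    rw [Finset.sum_comm]
  have h4 : ∀ e : (Bool × Fin k) × (Bool × Fin k),
      (Finset.univ.filter (fun j => e ∈ mobC k hk j)).card ≤ 2 := by
    intro e
    obtain ⟨a, b, hab⟩ := mobC_candidates k hk3 hk2 hk e
    refine le_trans (Finset.card_le_card (fun j hj => ?_))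
      (le_trans (Finset.card_insert_le a {b}) (by simp))
    rw [Finset.mem_filter] at hj
    simp only [Finset.mem_insert, Finset.mem_singleton]
    exact hab j hj.2
  have h5 : ∑ e ∈ V, (Finset.univ.filter (fun j => e ∈ mobC k hk j)).card
      ≤ 2 * V.card := by
    calc ∑ e ∈ V, (Finset.univ.filter (fun j => e ∈ mobC k hk j)).card
        ≤ ∑ _e ∈ V, 2 := Finset.sum_le_sum (fun e _ => h4 e)
      _ = 2 * V.card := by rw [Finset.sum_const, smul_eq_mul, mul_comm]
  omega

open scoped Classical in
/-- The `k`-Möbius game bound (`k` odd, `k ≥ 3`): with single-output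
partial-order correlations, the winning probability of the game on the
`3k`-arc Möbius digraph (uniform arc and uniform bit) is at most
`1 − (k+1)/(12k)`; this bound equals `1/2 + (5k−1)/(12k)` and is strictly
below `11/12`. -/
theorem stmt14 (n k : ℕ) (hk : 3 ≤ k) (hodd : k % 2 = 1)
    (p : Fin n → Fin n → Bool → Bool → ℝ) (hp : IsPOCorr n p)
    (w : Bool → Fin k → Fin n)
    (hw : Function.Injective fun q : Bool × Fin k => w q.1 q.2) :
    ((1 / (6 * (k : ℝ))) *
        ∑ a : Bool × Fin k, ∑ b : Bool × Fin k,
          (if MobArc k a b then ∑ x : Bool, p (w a.1 a.2) (w b.1 b.2) x x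
            else 0)
      ≤ 1 - ((k : ℝ) + 1) / (12 * (k : ℝ))) ∧
    1 - ((k : ℝ) + 1) / (12 * (k : ℝ))
      = 1 / 2 + (5 * (k : ℝ) - 1) / (12 * (k : ℝ)) ∧
    1 / 2 + (5 * (k : ℝ) - 1) / (12 * (k : ℝ)) < 11 / 12 := by
  have hk0 : 0 < k := by omega
  have hkR : (0:ℝ) < (k:ℝ) := by exact_mod_cast hk0
  refine ⟨?_, by field_simp; ring, ?_⟩
  · -- main bound
    obtain ⟨m, μ, σ, q, hμ0, hμ1, hpo, hq0, hq1, hind, hpq⟩ := hp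
    set A := Finset.univ.filter
      (fun e : (Bool × Fin k) × (Bool × Fin k) => MobArc k e.1 e.2) with hA
    have hsum : ∑ a : Bool × Fin k, ∑ b : Bool × Fin k,
          (if MobArc k a b then ∑ x : Bool, p (w a.1 a.2) (w b.1 b.2) x x
            else 0)
        = ∑ e ∈ A, ∑ x : Bool, p (w e.1.1 e.1.2) (w e.2.1 e.2.2) x x := by
      rw [← Finset.sum_product', Finset.univ_product_univ, hA,
        ← Finset.sum_filter]
    have hAcard : (A.card : ℝ) ≤ 3 * k := by
      have := mob_card_le k hk hodd hk0
      rw [hA]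
      exact_mod_cast this
    have key : ∀ i, (∑ e ∈ A,
        (q i (w e.1.1 e.1.2) (w e.2.1 e.2.2) false false
          + q i (w e.1.1 e.1.2) (w e.2.1 e.2.2) true true))
        ≤ (11 * (k:ℝ) - 1) / 2 := by
      intro i
      set τ : (Bool × Fin k) → (Bool × Fin k) → Prop :=
        fun a b => σ i (w a.1 a.2) (w b.1 b.2) with hτ
      have hR : ∀ a b c d, τ a b → τ b c → τ c d → τ d a → a = c := by
        intro a b c d h1 h2 h3 h4
        exact hw ((hpo i).antisymm _ _ ((hpo i).trans _ _ _ h1 h2)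
          ((hpo i).trans _ _ _ h3 h4))
      set V := Finset.univ.filter
        (fun e : (Bool × Fin k) × (Bool × Fin k) =>
          MobArc k e.1 e.2 ∧ ¬ τ e.1 e.2) with hV
      have hVcard : ((k : ℝ) + 1) / 2 ≤ (V.card : ℝ) := by
        have := mob_violated k hk hodd hk0 τ hR
        rw [hV]
        rw [div_le_iff₀ (by norm_num)]
        have : ((k : ℝ) + 1) ≤ 2 * (V.card : ℝ) := by exact_mod_cast this
        linarith
      have hVsub : V ⊆ A := by
        intro e he
        rw [hV, Finset.mem_filter] at he
        rw [hA, Finset.mem_filter]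
        exact ⟨he.1, he.2.1⟩
      have hq1' : ∀ s r x, q i s r x true + q i s r x false = 1 := by
        intro s r x
        have := hq1 i s r x
        rwa [Fintype.sum_bool] at this
      have hpt : ∀ e ∈ A,
          q i (w e.1.1 e.1.2) (w e.2.1 e.2.2) false false
            + q i (w e.1.1 e.1.2) (w e.2.1 e.2.2) true true
          ≤ 2 - (if e ∈ V then (1:ℝ) else 0) := by
        intro e he
        set s := w e.1.1 e.1.2
        set r := w e.2.1 e.2.2
        by_cases hv : e ∈ V
        · rw [if_pos hv]
          have hτe : ¬ τ e.1 e.2 := by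
            rw [hV, Finset.mem_filter] at hv
            exact hv.2.2
          have heq : q i s r true true = q i s r false true :=
            (hind i s r hτe true).symm
          have := hq1' s r false
          have h0 := hq0 i s r false true
          linarith
        · rw [if_neg hv]
          have h1 := hq1' s r false
          have h2 := hq1' s r true
          have h3 := hq0 i s r false true
          have h4 := hq0 i s r true false
          linarith
      calc ∑ e ∈ A,
            (q i (w e.1.1 e.1.2) (w e.2.1 e.2.2) false false
              + q i (w e.1.1 e.1.2) (w e.2.1 e.2.2) true true)
          ≤ ∑ e ∈ A, (2 - (if e ∈ V then (1:ℝ) else 0)) :=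
            Finset.sum_le_sum hpt
        _ = 2 * (A.card : ℝ) - (V.card : ℝ) := by
            rw [Finset.sum_sub_distrib, Finset.sum_const, Finset.sum_boole]
            rw [Finset.filter_mem_eq_inter, Finset.inter_eq_right.mpr hVsub]
            push_cast
            ring
        _ ≤ (11 * (k:ℝ) - 1) / 2 := by linarith
    have hswap : ∑ e ∈ A, ∑ x : Bool, p (w e.1.1 e.1.2) (w e.2.1 e.2.2) x x
        = ∑ i, μ i * (∑ e ∈ A,
          (q i (w e.1.1 e.1.2) (w e.2.1 e.2.2) false false
            + q i (w e.1.1 e.1.2) (w e.2.1 e.2.2) true true)) := by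
      have hstep : ∀ e ∈ A, ∑ x : Bool, p (w e.1.1 e.1.2) (w e.2.1 e.2.2) x x
          = ∑ i, μ i * (q i (w e.1.1 e.1.2) (w e.2.1 e.2.2) false false
            + q i (w e.1.1 e.1.2) (w e.2.1 e.2.2) true true) := by
        intro e _
        rw [Fintype.sum_bool, hpq, hpq, ← Finset.sum_add_distrib]
        apply Finset.sum_congr rfl
        intro i _
        ring
      rw [Finset.sum_congr rfl hstep, Finset.sum_comm]
      apply Finset.sum_congr rfl
      intro i _
      rw [← Finset.mul_sum]
    have hmain : ∑ e ∈ A, ∑ x : Bool, p (w e.1.1 e.1.2) (w e.2.1 e.2.2) x x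
        ≤ (11 * (k:ℝ) - 1) / 2 := by
      rw [hswap]
      calc ∑ i, μ i * (∑ e ∈ A,
            (q i (w e.1.1 e.1.2) (w e.2.1 e.2.2) false false
              + q i (w e.1.1 e.1.2) (w e.2.1 e.2.2) true true))
          ≤ ∑ i, μ i * ((11 * (k:ℝ) - 1) / 2) :=
            Finset.sum_le_sum (fun i _ =>
              mul_le_mul_of_nonneg_left (key i) (hμ0 i))
        _ = (11 * (k:ℝ) - 1) / 2 := by
            rw [← Finset.sum_mul, hμ1, one_mul]
    rw [hsum]
    calc (1 / (6 * (k : ℝ))) *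
          ∑ e ∈ A, ∑ x : Bool, p (w e.1.1 e.1.2) (w e.2.1 e.2.2) x x
        ≤ (1 / (6 * (k : ℝ))) * ((11 * (k:ℝ) - 1) / 2) := by
          apply mul_le_mul_of_nonneg_left hmain (by positivity)
      _ = 1 - ((k : ℝ) + 1) / (12 * (k : ℝ)) := by field_simp; ring
  · -- strict bound
    have h : (5 * (k:ℝ) - 1) / (12 * (k:ℝ)) < 5 / 12 := by
      rw [div_lt_div_iff₀ (by positivity) (by norm_num)]
      nlinarith
    linarith
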